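/- Let u_1, ..., u_{d-2} be linearly independent vectors in ℝ^d and let f_1, f_2, f'_1, f'_2 ∈ ℝ^d. Define linear forms φ(v) = det(v, u_2, ..., u_{d-2}, f_1, f_2)·det(u_1, ..., u_{d-2}, f'_1, f'_2) and ψ(v) = det(v, u_2, ..., u_{d-2}, f'_1, f'_2)·det(u_1, ..., u_{d-2}, f_1, f_2). If φ = ψ as linear forms and both determinants det(u_1,...,u_{d-2},f_1,f_2) and det(u_1,...,u_{d-2},f'_1,f'_2) are nonzero, then Span(u_2, ..., u_{d-2}, f_1, f_2) = Span(u_2, ..., u_{d-2}, f'_1, f'_2). -/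

import Mathlib

/-- The determinant of the `(m+2) × (m+2)` matrix whose columns are
`w, u 1, ..., u (m-1), g 0, g 1` (the column of index `0` among the `u`'s being
replaced by `w`). -/
noncomputable def colDet (m : ℕ) (u : Fin m → (Fin (m + 2) → ℝ))
    (w : Fin (m + 2) → ℝ) (g : Fin 2 → (Fin (m + 2) → ℝ)) : ℝ :=
  Matrix.det (Matrix.of fun i j =>
    (Sum.elim (fun k : Fin m => if (k : ℕ) = 0 then w else u k) g
      (finSumFinEquiv.symm j)) i)

theorem colDet_eq_update (m : ℕ) (hm : 0 < m) (u : Fin m → (Fin (m + 2) → ℝ))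
    (g : Fin 2 → (Fin (m + 2) → ℝ)) (w : Fin (m + 2) → ℝ) :
    colDet m u w g = Matrix.detRowAlternating
      (Function.update (fun j => Sum.elim u g (finSumFinEquiv.symm j))
        (finSumFinEquiv (Sum.inl ⟨0, hm⟩)) w) := by
  unfold colDet
  have h1 : (Matrix.of fun i j =>
      (Sum.elim (fun k : Fin m => if (k : ℕ) = 0 then w else u k) g
        (finSumFinEquiv.symm j)) i)
      = Matrix.transpose (Matrix.of fun j =>
          Sum.elim (fun k : Fin m => if (k : ℕ) = 0 then w else u k) g
            (finSumFinEquiv.symm j)) := by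
    ext i j
    rfl
  rw [h1, Matrix.det_transpose]
  have h2 : (fun j => Sum.elim (fun k : Fin m => if (k : ℕ) = 0 then w else u k) g
        (finSumFinEquiv.symm j))
      = Function.update (fun j => Sum.elim u g (finSumFinEquiv.symm j))
        (finSumFinEquiv (Sum.inl ⟨0, hm⟩)) w := by
    funext j
    by_cases hj : j = finSumFinEquiv (Sum.inl (⟨0, hm⟩ : Fin m))
    · subst hj
      rw [Function.update_self, Equiv.symm_apply_apply]
      simp
    · rw [Function.update_of_ne hj]
      rcases hs : finSumFinEquiv.symm j with k | k
      · simp only [Sum.elim_inl]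
        rw [if_neg]
        intro hk0
        apply hj
        have hk : k = (⟨0, hm⟩ : Fin m) := Fin.ext hk0
        rw [← Equiv.apply_symm_apply finSumFinEquiv j, hs, hk]
      · simp
  rw [h2]
  rfl

theorem aux_mem_span (m : ℕ) (hm : 0 < m) (u : Fin m → (Fin (m + 2) → ℝ))
    (g : Fin 2 → (Fin (m + 2) → ℝ))
    (hd : colDet m u (u ⟨0, hm⟩) g ≠ 0) (v : Fin (m + 2) → ℝ) :
    v ∈ Submodule.span ℝ ((u '' {k : Fin m | (k : ℕ) ≠ 0}) ∪ {g 0, g 1}) ↔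
      colDet m u v g = 0 := by
  classical
  set j0 : Fin (m + 2) := finSumFinEquiv (Sum.inl ⟨0, hm⟩) with hj0
  set C : Fin (m + 2) → (Fin (m + 2) → ℝ) :=
    fun j => Sum.elim u g (finSumFinEquiv.symm j) with hC
  have hCj0 : C j0 = u ⟨0, hm⟩ := by
    show Sum.elim u g (finSumFinEquiv.symm (finSumFinEquiv (Sum.inl ⟨0, hm⟩))) = u ⟨0, hm⟩
    rw [Equiv.symm_apply_apply]
    rfl
  -- the linear form
  set L : (Fin (m + 2) → ℝ) →ₗ[ℝ] ℝ :=
    (Matrix.detRowAlternating : (Fin (m + 2) → ℝ) [⋀^Fin (m + 2)]→ₗ[ℝ] ℝ)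
      |>.toMultilinearMap.toLinearMap C j0 with hL
  have hLval : ∀ w, L w = colDet m u w g := by
    intro w
    rw [colDet_eq_update m hm u g w]
    rfl
  -- the columns form a basis
  have hdet : (Matrix.of C).det ≠ 0 := by
    intro h
    apply hd
    rw [← hLval (u ⟨0, hm⟩), hL]
    simp only [MultilinearMap.toLinearMap_apply]
    rw [← hCj0, Function.update_eq_self]
    exact h
  have hLI : LinearIndependent ℝ C := by
    have := Matrix.linearIndependent_rows_iff_isUnit.mpr
      ((Matrix.isUnit_iff_isUnit_det _).mpr (isUnit_iff_ne_zero.mpr hdet))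
    exact this
  have hcard : Fintype.card (Fin (m + 2)) = Module.finrank ℝ (Fin (m + 2) → ℝ) := by simp
  let b : Module.Basis (Fin (m + 2)) ℝ (Fin (m + 2) → ℝ) :=
    basisOfLinearIndependentOfCardEqFinrank hLI hcard
  have hb : ∀ j, b j = C j := fun j => by
    simp [b, coe_basisOfLinearIndependentOfCardEqFinrank]
  -- L vanishes on the other columns
  have hLzero : ∀ j, j ≠ j0 → L (C j) = 0 := by
    intro j hj
    rw [hL]
    simp only [MultilinearMap.toLinearMap_apply]
    exact Matrix.detRowAlternating.map_eq_zero_of_eq _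
      (by rw [Function.update_self, Function.update_of_ne hj]) (Ne.symm hj)
  have hLb0 : L (b j0) ≠ 0 := by
    rw [hb, hCj0, hLval]; exact hd
  -- L v in coordinates
  have hLv : ∀ w, L w = b.repr w j0 * L (b j0) := by
    intro w
    conv_lhs => rw [← b.sum_repr w]
    rw [map_sum]
    rw [Finset.sum_eq_single j0]
    · rw [map_smul]; rfl
    · intro j _ hj
      rw [map_smul, hb, hLzero j hj, smul_zero]
    · intro h; exact absurd (Finset.mem_univ j0) h
  -- the generating set is the image of the other columns
  have hset : (u '' {k : Fin m | (k : ℕ) ≠ 0}) ∪ {g 0, g 1} = C '' {j | j ≠ j0} := by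
    ext x
    constructor
    · rintro (⟨k, hk, rfl⟩ | hx)
      · refine ⟨finSumFinEquiv (Sum.inl k), ?_, by simp [hC]⟩
        simp only [Set.mem_setOf_eq, hj0]
        intro h
        exact hk (congrArg Fin.val (Sum.inl_injective (finSumFinEquiv.injective h)))
      · rcases hx with rfl | rfl
        · refine ⟨finSumFinEquiv (Sum.inr 0), ?_, by simp [hC]⟩
          simp only [Set.mem_setOf_eq, hj0, ne_eq]
          intro h
          exact Sum.inr_ne_inl (finSumFinEquiv.injective h)
        · refine ⟨finSumFinEquiv (Sum.inr 1), ?_, by simp [hC]⟩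
          simp only [Set.mem_setOf_eq, hj0, ne_eq]
          intro h
          exact Sum.inr_ne_inl (finSumFinEquiv.injective h)
    · rintro ⟨j, hj, rfl⟩
      simp only [Set.mem_setOf_eq, hj0] at hj
      rcases hs : finSumFinEquiv.symm j with k | k
      · left
        refine ⟨k, ?_, by simp [hC, hs]⟩
        intro hk0
        apply hj
        have : k = (⟨0, hm⟩ : Fin m) := Fin.ext hk0
        rw [← Equiv.apply_symm_apply finSumFinEquiv j, hs, this]
      · right
        have : C j = g k := by simp [hC, hs]
        fin_cases k
        · left; exact this
        · right; rw [this]; rfl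
  rw [hset]
  constructor
  · intro hv
    rw [← hLval]
    refine Submodule.span_induction ?_ (by simp) (fun x y _ _ hx hy => by
      rw [map_add, hx, hy, add_zero]) (fun a x _ hx => by rw [map_smul, hx, smul_zero]) hv
    rintro x ⟨j, hj, rfl⟩
    exact hLzero j hj
  · intro hv
    have h0 : b.repr v j0 = 0 := by
      have := hLv v
      rw [hLval, hv] at this
      rcases mul_eq_zero.mp this.symm with h | h
      · exact h
      · exact absurd h hLb0
    have : v ∈ Submodule.span ℝ (b '' {j | j ≠ j0}) := by
      rw [Module.Basis.mem_span_image]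
      intro j hj
      simp only [Finset.mem_coe, Finsupp.mem_support_iff] at hj
      simp only [Set.mem_setOf_eq]
      intro hjj0
      exact hj (hjj0 ▸ h0)
    rwa [show b '' {j | j ≠ j0} = C '' {j | j ≠ j0} from Set.image_congr fun j _ => hb j] at this

/-- If the linear forms
`φ(v) = det(v,u₂,...,u_{d-2},f₁,f₂)·det(u₁,...,u_{d-2},f'₁,f'₂)` and
`ψ(v) = det(v,u₂,...,u_{d-2},f'₁,f'₂)·det(u₁,...,u_{d-2},f₁,f₂)` coincide and
both determinants are nonzero, then
`Span(u₂,...,u_{d-2},f₁,f₂) = Span(u₂,...,u_{d-2},f'₁,f'₂)`. -/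
theorem stmt5 (m : ℕ) (hm : 0 < m) (u : Fin m → (Fin (m + 2) → ℝ))
    (hu : LinearIndependent ℝ u) (f f' : Fin 2 → (Fin (m + 2) → ℝ))
    (hd1 : colDet m u (u ⟨0, hm⟩) f ≠ 0)
    (hd2 : colDet m u (u ⟨0, hm⟩) f' ≠ 0)
    (heq : ∀ v : Fin (m + 2) → ℝ,
      colDet m u v f * colDet m u (u ⟨0, hm⟩) f'
        = colDet m u v f' * colDet m u (u ⟨0, hm⟩) f) :
    Submodule.span ℝ ((u '' {k : Fin m | (k : ℕ) ≠ 0}) ∪ {f 0, f 1})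
      = Submodule.span ℝ ((u '' {k : Fin m | (k : ℕ) ≠ 0}) ∪ {f' 0, f' 1}) := by
  ext v
  rw [aux_mem_span m hm u f hd1 v, aux_mem_span m hm u f' hd2 v]
  constructor
  · intro h
    have := heq v
    rw [h, zero_mul] at this
    rcases mul_eq_zero.mp this.symm with h' | h'
    · exact h'
    · exact absurd h' hd1
  · intro h
    have := heq v
    rw [h, zero_mul] at this
    rcases mul_eq_zero.mp this with h' | h'
    · exact h'
    · exact absurd h' hd2
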